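/- arXiv:2010.11114 — 3 statements merged into one kernel-verified Lean document; each statement's English description precedes it below -/
import Mathlib

section
/- Let A_1,...,A_N be linearly independent vectors in a complex inner product space and define B_1 = A_1/√(G_{1,1}) and, for 2 ≤ n ≤ N, B_n = (A_n - Σ_{i=1}^{n-1} A_i (G_{n-1}^{-1} g_n)_i)/√(S_n), where S_n = G_{n,n} - g_n^H G_{n-1}^{-1} g_n. Then B_1,...,B_N equal the orthonormal vectors produced by the Gram–Schmidt process applied to A_1,...,A_N. -/
open scoped ComplexInnerProductSpace Matrix
open InnerProductSpace

/-- If `v` is orthogonal to the span of the previous vectors and differs from `A n`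
by an element of that span, then `v` is the `n`-th Gram–Schmidt vector. -/
lemma gramSchmidt_eq_of_orthogonal
    {V : Type*} [NormedAddCommGroup V] [InnerProductSpace ℂ V]
    {ι : Type*} [LinearOrder ι] [LocallyFiniteOrderBot ι] [WellFoundedLT ι]
    (A : ι → V) (n : ι) (v : V)
    (hv : ∀ u ∈ Submodule.span ℂ (A '' Set.Iio n), ⟪u, v⟫ = 0)
    (hmem : A n - v ∈ Submodule.span ℂ (A '' Set.Iio n)) :
    gramSchmidt ℂ A n = v := by
  set w : V := gramSchmidt ℂ A n with hw
  set K : Submodule ℂ V := Submodule.span ℂ (A '' Set.Iio n) with hK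
  have hwK : ∀ u ∈ K, ⟪u, w⟫ = 0 := by
    intro u hu
    have hKgs : K = Submodule.span ℂ (gramSchmidt ℂ A '' Set.Iio n) :=
      (span_gramSchmidt_Iio ℂ A n).symm
    have hle : K ≤ (ℂ ∙ w)ᗮ := by
      rw [hKgs, Submodule.span_le]
      rintro _ ⟨i, hi, rfl⟩
      rw [SetLike.mem_coe, Submodule.mem_orthogonal_singleton_iff_inner_left]
      exact gramSchmidt_orthogonal ℂ A (ne_of_lt hi)
    exact Submodule.mem_orthogonal_singleton_iff_inner_left.mp (hle hu)
  have hAnw : A n - w ∈ K := by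
    have hdef := gramSchmidt_def ℂ A n
    have h1 : A n - w = ∑ i ∈ Finset.Iio n,
        (ℂ ∙ gramSchmidt ℂ A i).starProjection (A n) := by
      rw [hw, hdef]; abel
    rw [h1]
    refine Submodule.sum_mem _ fun i hi => ?_
    have hgs : gramSchmidt ℂ A i ∈ K := by
      rw [hK, ← span_gramSchmidt_Iio ℂ A n]
      exact Submodule.subset_span ⟨i, Finset.mem_Iio.mp hi, rfl⟩
    have hle : (ℂ ∙ gramSchmidt ℂ A i) ≤ K := by
      rw [Submodule.span_singleton_le_iff_mem]; exact hgs
    exact hle ((ℂ ∙ gramSchmidt ℂ A i).starProjection_apply_mem (A n))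
  have hwv : w - v ∈ K := by
    have h2 : w - v = (A n - v) - (A n - w) := by abel
    rw [h2]
    exact Submodule.sub_mem _ hmem hAnw
  have h0 : ⟪w - v, w - v⟫ = 0 := by
    rw [inner_sub_right, hwK _ hwv, hv _ hwv, sub_zero]
  exact sub_eq_zero.mp (inner_self_eq_zero.mp h0)

/-- Normed version of `gramSchmidt_eq_of_orthogonal`. -/
lemma gramSchmidtNormed_eq_of_orthogonal
    {V : Type*} [NormedAddCommGroup V] [InnerProductSpace ℂ V]
    {ι : Type*} [LinearOrder ι] [LocallyFiniteOrderBot ι] [WellFoundedLT ι]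
    (A : ι → V) (n : ι) (v : V)
    (hv : ∀ u ∈ Submodule.span ℂ (A '' Set.Iio n), ⟪u, v⟫ = 0)
    (hmem : A n - v ∈ Submodule.span ℂ (A '' Set.Iio n)) :
    gramSchmidtNormed ℂ A n = ((‖v‖ : ℝ) : ℂ)⁻¹ • v := by
  rw [gramSchmidtNormed, gramSchmidt_eq_of_orthogonal A n v hv hmem]
  norm_num

/-- The non-iterative formula `B n = (A n - Σ_{i<n} (G_n⁻¹ g_n)_i • A i) / √(S n)`,
where `G n` is the Gram matrix of the first `n` vectors, `g n` its mixed column and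
`S n` the Schur complement, produces exactly the orthonormal vectors of the
Gram–Schmidt process applied to the linearly independent family `A`. -/
theorem noniterative_gramSchmidt
    {V : Type*} [NormedAddCommGroup V] [InnerProductSpace ℂ V]
    {N : ℕ} (A B : Fin N → V) (hA : LinearIndependent ℂ A)
    (G : ∀ n : Fin N, Matrix (Fin n.val) (Fin n.val) ℂ)
    (hG : ∀ (n : Fin N) (i j : Fin n.val),
      G n i j = ⟪A (Fin.castLE n.isLt.le i), A (Fin.castLE n.isLt.le j)⟫)
    (g : ∀ n : Fin N, Fin n.val → ℂ)
    (hg : ∀ (n : Fin N) (i : Fin n.val), g n i = ⟪A (Fin.castLE n.isLt.le i), A n⟫)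
    (S : Fin N → ℂ)
    (hS : ∀ n : Fin N, S n = ⟪A n, A n⟫ - star (g n) ⬝ᵥ ((G n)⁻¹ *ᵥ g n))
    (hB : ∀ n : Fin N, B n = ((Real.sqrt (S n).re : ℂ))⁻¹ •
      (A n - ∑ i : Fin n.val, ((G n)⁻¹ *ᵥ g n) i • A (Fin.castLE n.isLt.le i))) :
    B = @InnerProductSpace.gramSchmidtNormed ℂ V _ _ _ (Fin N) _ _ (inferInstance : WellFoundedLT (Fin N)) A := by
  funext n
  set c : Fin n.val → ℂ := (G n)⁻¹ *ᵥ g n with hc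
  set s : V := ∑ i : Fin n.val, c i • A (Fin.castLE n.isLt.le i) with hs
  set v : V := A n - s with hvdef
  -- the Gram matrix is invertible
  have hker : ∀ x : Fin n.val → ℂ, G n *ᵥ x = 0 → x = 0 := by
    intro x hx
    have hAi : ∀ i : Fin n.val,
        ⟪A (Fin.castLE n.isLt.le i), ∑ j : Fin n.val, x j • A (Fin.castLE n.isLt.le j)⟫ = 0 := by
      intro i
      have h0 : (G n *ᵥ x) i = 0 := by rw [hx]; rfl
      rw [inner_sum]
      simp only [inner_smul_right]
      rw [← h0]
      simp [Matrix.mulVec, dotProduct, hG, mul_comm]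
    have hu : ∑ j : Fin n.val, x j • A (Fin.castLE n.isLt.le j) = 0 := by
      rw [← inner_self_eq_zero (𝕜 := ℂ), sum_inner]
      refine Finset.sum_eq_zero fun i _ => ?_
      rw [inner_smul_left, hAi i, mul_zero]
    have hli : LinearIndependent ℂ (fun i : Fin n.val => A (Fin.castLE n.isLt.le i)) :=
      hA.comp _ (Fin.castLE_injective _)
    exact funext (Fintype.linearIndependent_iff.mp hli x hu)
  have hinj : Function.Injective (G n).mulVec := by
    intro x y hxy
    have h1 : G n *ᵥ (x - y) = 0 := by rw [Matrix.mulVec_sub, hxy, sub_self]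
    exact sub_eq_zero.mp (hker _ h1)
  have hdet : IsUnit (G n).det :=
    (Matrix.isUnit_iff_isUnit_det _).mp (Matrix.mulVec_injective_iff_isUnit.mp hinj)
  have hGc : G n *ᵥ c = g n := by
    rw [hc, Matrix.mulVec_mulVec, Matrix.mul_nonsing_inv _ hdet, Matrix.one_mulVec]
  -- v is orthogonal to each earlier A
  have key1 : ∀ i : Fin n.val, ⟪A (Fin.castLE n.isLt.le i), v⟫ = 0 := by
    intro i
    have h1 : ⟪A (Fin.castLE n.isLt.le i), s⟫ = (G n *ᵥ c) i := by
      rw [hs, inner_sum]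
      simp only [inner_smul_right]
      simp [Matrix.mulVec, dotProduct, hG, mul_comm]
    rw [hvdef, inner_sub_right, h1, hGc, hg, sub_self]
  -- v is orthogonal to the span of the earlier A's
  have hv : ∀ u ∈ Submodule.span ℂ (A '' Set.Iio n), ⟪u, v⟫ = 0 := by
    intro u hu
    have hle : Submodule.span ℂ (A '' Set.Iio n) ≤ (ℂ ∙ v)ᗮ := by
      rw [Submodule.span_le]
      rintro _ ⟨i, hi, rfl⟩
      rw [SetLike.mem_coe, Submodule.mem_orthogonal_singleton_iff_inner_left]
      have hi' : (i : ℕ) < n.val := hi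
      have h2 : i = Fin.castLE n.isLt.le ⟨i.val, hi'⟩ := by ext; rfl
      rw [h2]
      exact key1 _
    exact Submodule.mem_orthogonal_singleton_iff_inner_left.mp (hle hu)
  have hmem : A n - v ∈ Submodule.span ℂ (A '' Set.Iio n) := by
    have h3 : A n - v = s := by rw [hvdef]; abel
    rw [h3, hs]
    refine Submodule.sum_mem _ fun i _ => Submodule.smul_mem _ _ (Submodule.subset_span ?_)
    exact ⟨Fin.castLE n.isLt.le i, i.isLt, rfl⟩
  -- the Schur complement equals ‖v‖²
  have hSv : S n = ⟪v, v⟫ := by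
    have h1 : ⟪s, v⟫ = 0 := by
      rw [hs, sum_inner]
      refine Finset.sum_eq_zero fun i _ => ?_
      rw [inner_smul_left, key1 i, mul_zero]
    have h2 : ⟪A n, s⟫ = star (g n) ⬝ᵥ c := by
      rw [hs, inner_sum]
      simp only [inner_smul_right]
      rw [dotProduct]
      refine Finset.sum_congr rfl fun i _ => ?_
      rw [Pi.star_apply, hg, ← inner_conj_symm]
      rw [RCLike.star_def]
      ring
    calc S n = ⟪A n, A n⟫ - star (g n) ⬝ᵥ c := hS n
    _ = ⟪A n, A n - s⟫ := by rw [inner_sub_right, h2]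
    _ = ⟪A n - s, A n - s⟫ := by
        rw [inner_sub_left (𝕜 := ℂ) (A n) s (A n - s), ← hvdef, h1, sub_zero]
    _ = ⟪v, v⟫ := rfl
  have hnorm : Real.sqrt (S n).re = ‖v‖ := by
    have h4 : ⟪v, v⟫ = ((‖v‖ : ℂ)) ^ 2 := inner_self_eq_norm_sq_to_K v
    rw [hSv, h4, ← Complex.ofReal_pow, Complex.ofReal_re]
    exact Real.sqrt_sq (norm_nonneg v)
  rw [hB n, hnorm]
  exact (@gramSchmidtNormed_eq_of_orthogonal V _ _ (Fin N) _ _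
    (inferInstance : WellFoundedLT (Fin N)) A n v hv hmem).symm
end

section
/- Let A_1,...,A_N be linearly independent vectors in a complex inner product space and define B_n as in the non-iterative Gram–Schmidt formula: B_n = (A_n - Σ_{i=1}^{n-1} A_i (G_{n-1}^{-1} g_n)_i)/√(S_n). Then for any m < n, ⟨A_m, B_n⟩ = 0; i.e., B_n is orthogonal to the span of A_1,...,A_{n-1}. -/
open scoped ComplexInnerProductSpace Matrix

lemma gram_isUnit {V : Type*} [NormedAddCommGroup V] [InnerProductSpace ℂ V]
    {k : ℕ} (w : Fin k → V) (hw : LinearIndependent ℂ w)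
    (M : Matrix (Fin k) (Fin k) ℂ) (hM : ∀ i j, M i j = ⟪w i, w j⟫) :
    IsUnit M := by
  rw [← Matrix.mulVec_injective_iff_isUnit]
  have key : ∀ c, M *ᵥ c = 0 → c = 0 := by
    intro c hc
    set v := ∑ j, c j • w j with hv
    have hiv : ∀ i, ⟪w i, v⟫ = 0 := by
      intro i
      have := congrFun hc i
      simp only [Matrix.mulVec, dotProduct, hM, Pi.zero_apply] at this
      rw [hv, inner_sum]
      simpa [inner_smul_right, mul_comm] using this
    have hvv : v = 0 := by
      rw [← inner_self_eq_zero (𝕜 := ℂ) (x := v)]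
      rw [hv, sum_inner]
      simp [inner_smul_left, ← hv, hiv]
    have := Fintype.linearIndependent_iff.mp hw c (by rw [← hv, hvv])
    funext i; exact this i
  intro x y h
  have := key (x - y) (by rw [Matrix.mulVec_sub, h, sub_self])
  exact sub_eq_zero.mp this

/-- Each vector produced by the non-iterative Gram–Schmidt formula
`B n = (A n - Σ_{i<n} (G_n⁻¹ g_n)_i • A i) / √(S n)` is orthogonal to all the
preceding vectors `A m`, `m < n` (hence to their span). -/
theorem noniterative_gramSchmidt_orthogonal
    {V : Type*} [NormedAddCommGroup V] [InnerProductSpace ℂ V]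
    {N : ℕ} (A B : Fin N → V) (hA : LinearIndependent ℂ A)
    (G : ∀ n : Fin N, Matrix (Fin n.val) (Fin n.val) ℂ)
    (hG : ∀ (n : Fin N) (i j : Fin n.val),
      G n i j = ⟪A (Fin.castLE n.isLt.le i), A (Fin.castLE n.isLt.le j)⟫)
    (g : ∀ n : Fin N, Fin n.val → ℂ)
    (hg : ∀ (n : Fin N) (i : Fin n.val), g n i = ⟪A (Fin.castLE n.isLt.le i), A n⟫)
    (S : Fin N → ℂ)
    (hS : ∀ n : Fin N, S n = ⟪A n, A n⟫ - star (g n) ⬝ᵥ ((G n)⁻¹ *ᵥ g n))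
    (hB : ∀ n : Fin N, B n = ((Real.sqrt (S n).re : ℂ))⁻¹ •
      (A n - ∑ i : Fin n.val, ((G n)⁻¹ *ᵥ g n) i • A (Fin.castLE n.isLt.le i))) :
    ∀ n m : Fin N, m < n → ⟪A m, B n⟫ = 0 := by
  intro n m hmn
  set c : Fin n.val → ℂ := (G n)⁻¹ *ᵥ g n with hc
  have hw : LinearIndependent ℂ (fun i : Fin n.val => A (Fin.castLE n.isLt.le i)) :=
    hA.comp _ (Fin.castLE_injective _)
  have hU : IsUnit (G n) := gram_isUnit _ hw _ (hG n)
  have hMul : G n *ᵥ c = g n := by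
    rw [hc, Matrix.mulVec_mulVec, Matrix.mul_nonsing_inv _ ((Matrix.isUnit_iff_isUnit_det _).mp hU),
      Matrix.one_mulVec]
  set m' : Fin n.val := ⟨m.val, hmn⟩ with hm'
  have hcast : Fin.castLE n.isLt.le m' = m := rfl
  have h1 : ⟪A m, A n - ∑ i : Fin n.val, c i • A (Fin.castLE n.isLt.le i)⟫ = 0 := by
    rw [inner_sub_right, inner_sum]
    have hrow := congrFun hMul m'
    simp only [Matrix.mulVec, dotProduct] at hrow
    rw [hg n m', hcast] at hrow
    rw [← hrow]
    simp_rw [inner_smul_right]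
    rw [sub_eq_zero]
    congr 1
    ext i
    rw [hG n m' i, hcast, mul_comm]
  rw [hB n, inner_smul_right, hc] at *
  rw [h1, mul_zero]
end

section
/- Let d_{n1}²,...,d_{nν₀}² be positive reals with minimum d_min² and maximum d_max², ρ = d_min²/d_max², and let N ≥ ν₀. If κ_I > ln(N)/ln(ρ/N + 1), then for every k with 1 ≤ k ≤ ν₀ - 1: Σ_{i=1}^{ν₀-k} d_{ni}² < (Σ_{i=ν₀-k+1}^{ν₀} d_{ni}²) / ((ν₀/(ν₀-k))^{1/κ_I} - 1). -/
/-- Simplified consistency condition for the PMEP-I (inverse penalty) algorithm: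
if `κ_I > ln N / ln(ρ/N + 1)` with `ρ = d_min²/d_max²` and `N ≥ ν₀`, then for
every `1 ≤ k ≤ ν₀ - 1`,
`Σ_{i=1}^{ν₀-k} d_i² < (Σ_{i=ν₀-k+1}^{ν₀} d_i²)/((ν₀/(ν₀-k))^{1/κ_I} - 1)`. -/
theorem PMEP_I_consistency
    {ν₀ N : ℕ} (hν : 0 < ν₀) (hN : ν₀ ≤ N)
    (dsq : Fin ν₀ → ℝ) (hd : ∀ i, 0 < dsq i)
    (hne : (Finset.univ : Finset (Fin ν₀)).Nonempty)
    (dmin dmax ρ κI : ℝ)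
    (hmin : dmin = Finset.univ.inf' hne dsq)
    (hmax : dmax = Finset.univ.sup' hne dsq)
    (hρ : ρ = dmin / dmax)
    (hκ : Real.log N / Real.log (ρ / N + 1) < κI) :
    ∀ k : ℕ, 1 ≤ k → k ≤ ν₀ - 1 →
      ∑ i ∈ Finset.univ.filter (fun i : Fin ν₀ => i.val < ν₀ - k), dsq i
        < (∑ i ∈ Finset.univ.filter (fun i : Fin ν₀ => ν₀ - k ≤ i.val), dsq i)
          / (((ν₀ : ℝ) / ((ν₀ : ℝ) - (k : ℝ))) ^ ((1 : ℝ) / κI) - 1) := by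
  intro k hk1 hk2
  -- basic numeric facts
  have hkν : k + 1 ≤ ν₀ := by omega
  have hν2 : 2 ≤ ν₀ := by omega
  have hN2 : 2 ≤ N := le_trans hν2 hN
  have hdmin : 0 < dmin := by
    rw [hmin, Finset.lt_inf'_iff]
    exact fun i _ => hd i
  have hdmax : 0 < dmax := by
    obtain ⟨i⟩ := hne
    calc 0 < dsq i := hd i
      _ ≤ _ := hmax ▸ Finset.le_sup' dsq (Finset.mem_univ i)
  have hminmax : dmin ≤ dmax := by
    obtain ⟨i⟩ := hne
    calc dmin ≤ dsq i := hmin ▸ Finset.inf'_le dsq (Finset.mem_univ i)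
      _ ≤ dmax := hmax ▸ Finset.le_sup' dsq (Finset.mem_univ i)
  have hNpos : (0:ℝ) < N := by positivity
  have hρpos : 0 < ρ := by rw [hρ]; positivity
  have hbase1 : (1:ℝ) < ρ / N + 1 := by
    have : 0 < ρ / N := by positivity
    linarith
  have hlogb : 0 < Real.log (ρ / N + 1) := Real.log_pos hbase1
  have hlogN : 0 < Real.log N := Real.log_pos (by exact_mod_cast hN2)
  have hκpos : 0 < κI := lt_trans (by positivity) hκ
  -- the exponent inequality : N ^ (1/κI) < ρ/N + 1
  have hexp : Real.log N < κI * Real.log (ρ / N + 1) := (div_lt_iff₀ hlogb).mp hκ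
  have hexp2 : (1 / κI) * Real.log N < Real.log (ρ / N + 1) := by
    rw [one_div, inv_mul_lt_iff₀ hκpos]; exact hexp
  have hNpow : (N:ℝ) ^ ((1:ℝ)/κI) < ρ / N + 1 := by
    have h1 : (N:ℝ) ^ ((1:ℝ)/κI) = Real.exp ((1/κI) * Real.log N) := by
      rw [Real.rpow_def_of_pos hNpos]
      ring_nf
    have h2 : ρ / N + 1 = Real.exp (Real.log (ρ / N + 1)) :=
      (Real.exp_log (by linarith)).symm
    rw [h1, h2]
    exact Real.exp_lt_exp.mpr hexp2
  -- base b = ν₀/(ν₀-k)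
  set b : ℝ := (ν₀ : ℝ) / ((ν₀ : ℝ) - (k : ℝ)) with hb
  have hνk1 : (1:ℝ) ≤ (ν₀:ℝ) - (k:ℝ) := by
    have : (k:ℝ) + 1 ≤ (ν₀:ℝ) := by exact_mod_cast hkν
    linarith
  have hb1 : 1 < b := by
    rw [hb, lt_div_iff₀ (by linarith)]
    have : (0:ℝ) < k := by exact_mod_cast hk1
    linarith
  have hbN : b ≤ (N:ℝ) := by
    rw [hb, div_le_iff₀ (by linarith)]
    have hνN : (ν₀:ℝ) ≤ N := by exact_mod_cast hN
    nlinarith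
  set c : ℝ := b ^ ((1:ℝ)/κI) with hc
  have hc1 : 1 < c :=
    Real.one_lt_rpow_iff_of_pos (by linarith) |>.mpr (Or.inl ⟨hb1, by positivity⟩)
  have hcN : c ≤ (N:ℝ) ^ ((1:ℝ)/κI) :=
    Real.rpow_le_rpow (by linarith) hbN (by positivity)
  have hclt : c - 1 < ρ / N := by
    have := lt_of_le_of_lt hcN hNpow
    linarith
  -- sums
  set S₁ := ∑ i ∈ Finset.univ.filter (fun i : Fin ν₀ => i.val < ν₀ - k), dsq i with hS1
  set S₂ := ∑ i ∈ Finset.univ.filter (fun i : Fin ν₀ => ν₀ - k ≤ i.val), dsq i with hS2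
  have hS1pos : 0 < S₁ := by
    apply Finset.sum_pos (fun i _ => hd i)
    exact ⟨⟨0, hν⟩, by simp; omega⟩
  have hS1le : S₁ ≤ (ν₀:ℝ) * dmax := by
    have h1 : S₁ ≤ ∑ i : Fin ν₀, dsq i :=
      Finset.sum_le_sum_of_subset_of_nonneg (Finset.filter_subset _ _)
        (fun i _ _ => (hd i).le)
    have h2 : ∑ i : Fin ν₀, dsq i ≤ Finset.univ.card • dmax :=
      Finset.sum_le_card_nsmul _ _ _
        (fun i _ => hmax ▸ Finset.le_sup' dsq (Finset.mem_univ i))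
    simp only [Finset.card_univ, Fintype.card_fin, nsmul_eq_mul] at h2
    linarith
  have hS1N : S₁ ≤ (N:ℝ) * dmax := by
    have hνN : (ν₀:ℝ) ≤ N := by exact_mod_cast hN
    nlinarith
  have hS2ge : dmin ≤ S₂ := by
    have hmem : (⟨ν₀ - 1, by omega⟩ : Fin ν₀) ∈
        Finset.univ.filter (fun i : Fin ν₀ => ν₀ - k ≤ i.val) := by
      simp; omega
    calc dmin ≤ dsq ⟨ν₀ - 1, by omega⟩ :=
          hmin ▸ Finset.inf'_le dsq (Finset.mem_univ _)
      _ ≤ S₂ := Finset.single_le_sum (fun i _ => (hd i).le) hmem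
  -- combine
  have hc1' : 0 < c - 1 := by linarith
  rw [lt_div_iff₀ hc1']
  have key : S₁ * (c - 1) < S₁ * (ρ / N) :=
    mul_lt_mul_of_pos_left hclt hS1pos
  have key2 : S₁ * (ρ / N) ≤ (N * dmax) * (ρ / N) :=
    mul_le_mul_of_nonneg_right hS1N (by positivity)
  have key3 : (N * dmax) * (ρ / N) = dmin := by
    rw [hρ]; field_simp
  linarith
end
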